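/- Let G be a finite non-complete connected simple graph, let T and T′ be smallest cuts of G, let F be a T-fragment of G and let F′ be a T′-fragment of G. If F ∩ F′ ≠ ∅, then |F ∩ T′| ≥ |F̄′ ∩ T|, where F̄′ = V(G) − (F′ ∪ T′). -/

import Mathlib

open SimpleGraph

variable {V : Type*}

/-- A graph is `k`-connected: it has at least `k+1` vertices, and removing any set of
fewer than `k` vertices leaves a connected graph. -/
def KConnected (k : ℕ) (G : SimpleGraph V) : Prop :=
  k + 1 ≤ Nat.card V ∧ ∀ S : Set V, S.ncard < k → (G.induce Sᶜ).Connected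

/-- Contraction of the non-edge `{u, v}`: `u` and `v` are replaced by a single
vertex (represented here by `u`), adjacent to every vertex that was adjacent to
`u` or to `v`. -/
def contractNonEdge (G : SimpleGraph V) (u v : V) : SimpleGraph {w : V // w ≠ v} where
  Adj a b := a ≠ b ∧ (G.Adj a.1 b.1 ∨ (a.1 = u ∧ G.Adj v b.1) ∨ (b.1 = u ∧ G.Adj a.1 v))
  symm := by
    constructor
    rintro a b ⟨hab, h | ⟨h1, h2⟩ | ⟨h1, h2⟩⟩
    · exact ⟨hab.symm, Or.inl h.symm⟩
    · exact ⟨hab.symm, Or.inr (Or.inr ⟨h1, h2.symm⟩)⟩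
    · exact ⟨hab.symm, Or.inr (Or.inl ⟨h1, h2.symm⟩)⟩
  loopless := ⟨fun a h => h.1 rfl⟩

/-- `{u, v}` is a contractible non-edge of `G`: a non-edge whose contraction yields
a `3`-connected graph. -/
def IsContractibleNonEdge (G : SimpleGraph V) (u v : V) : Prop :=
  u ≠ v ∧ ¬ G.Adj u v ∧ KConnected 3 (contractNonEdge G u v)

/-- The set of contractible non-edges of `G`, as unordered pairs of vertices. -/
def contractibleNonEdges (G : SimpleGraph V) : Set (Sym2 V) :=
  {p | ∃ u v : V, p = s(u, v) ∧ IsContractibleNonEdge G u v}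

/-- `S` is a cut of `G`: deleting the vertices of `S` leaves a disconnected graph. -/
def IsCutSet (G : SimpleGraph V) (S : Set V) : Prop :=
  ¬ (G.induce Sᶜ).Preconnected

/-- `C` is the vertex set of a (connected) component of `G − S`. -/
def IsCompOf (G : SimpleGraph V) (S : Set V) (C : Set V) : Prop :=
  C.Nonempty ∧ C ⊆ Sᶜ ∧ (G.induce C).Connected ∧
    ∀ x ∈ C, ∀ y, y ∉ S → G.Adj x y → y ∈ C

/-- `T` is a smallest cut of `G`: a cut whose size equals the vertex connectivity,
i.e. a cut of minimum cardinality. -/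
def IsSmallestCut (G : SimpleGraph V) (T : Set V) : Prop :=
  IsCutSet G T ∧ ∀ T' : Set V, IsCutSet G T' → T.ncard ≤ T'.ncard

/-- `F` is a `T`-fragment of `G`: the union of the vertex sets of at least one,
but not all, of the components of `G − T`. -/
def IsFragment (G : SimpleGraph V) (T : Set V) (F : Set V) : Prop :=
  ∃ Cs : Set (Set V), Cs.Nonempty ∧ (∀ C ∈ Cs, IsCompOf G T C) ∧
    (∃ C, IsCompOf G T C ∧ C ∉ Cs) ∧ F = ⋃₀ Cs

lemma walk_mem_aux {W : Type*} {H : SimpleGraph W} {A : Set W}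
    (hA : ∀ x ∈ A, ∀ y, H.Adj x y → y ∈ A) :
    ∀ {u v : W}, H.Walk u v → u ∈ A → v ∈ A
  | _, _, SimpleGraph.Walk.nil, hu => hu
  | _, _, SimpleGraph.Walk.cons h p, hu => walk_mem_aux hA p (hA _ hu _ h)

lemma comp_subset_aux {G : SimpleGraph V} {S C D : Set V}
    (hC : IsCompOf G S C) (hD : IsCompOf G S D) {x : V} (hxC : x ∈ C) (hxD : x ∈ D) :
    C ⊆ D := by
  intro y hy
  obtain ⟨w⟩ := hC.2.2.1.preconnected ⟨x, hxC⟩ ⟨y, hy⟩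
  have : (⟨y, hy⟩ : C) ∈ {z : C | z.1 ∈ D} := by
    refine walk_mem_aux ?_ w hxD
    rintro a ha b hab
    exact hD.2.2.2 a.1 ha b.1 (hC.2.1 b.2) hab
  exact this

lemma frag_subset_aux {G : SimpleGraph V} {T F : Set V} (hF : IsFragment G T F) :
    F ⊆ Tᶜ := by
  obtain ⟨Cs, -, hcomp, -, rfl⟩ := hF
  exact Set.sUnion_subset fun C hC => (hcomp C hC).2.1

lemma frag_closed_aux {G : SimpleGraph V} {T F : Set V} (hF : IsFragment G T F)
    {x y : V} (hx : x ∈ F) (hy : y ∉ T) (hadj : G.Adj x y) : y ∈ F := by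
  obtain ⟨Cs, -, hcomp, -, rfl⟩ := hF
  obtain ⟨C, hC, hxC⟩ := hx
  exact ⟨C, hC, (hcomp C hC).2.2.2 x hxC y hy hadj⟩

lemma frag_compl_nonempty_aux {G : SimpleGraph V} {T F : Set V}
    (hF : IsFragment G T F) : ((F ∪ T)ᶜ).Nonempty := by
  obtain ⟨Cs, -, hcomp, ⟨C0, hC0, hC0not⟩, rfl⟩ := hF
  obtain ⟨b, hb⟩ := hC0.1
  refine ⟨b, ?_⟩
  rintro (⟨C, hC, hbC⟩ | hbT)
  · exact hC0not (by
      have h1 := comp_subset_aux hC0 (hcomp C hC) hb hbC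
      have h2 := comp_subset_aux (hcomp C hC) hC0 hbC hb
      rw [Set.Subset.antisymm h1 h2]; exact hC)
  · exact hC0.2.1 hb hbT

/-- Let `G` be a finite non-complete connected graph, `T, T′` smallest cuts of `G`,
`F` a `T`-fragment and `F′` a `T′`-fragment. If `F ∩ F′ ≠ ∅`, then
`|F ∩ T′| ≥ |F̄′ ∩ T|`, where `F̄′ = V(G) − (F′ ∪ T′)`. -/
theorem stmt4 {V : Type*} [Fintype V] (G : SimpleGraph V) (hconn : G.Connected)
    (hnc : ∃ u v : V, u ≠ v ∧ ¬ G.Adj u v)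
    (T T' : Set V) (hT : IsSmallestCut G T) (hT' : IsSmallestCut G T')
    (F F' : Set V) (hF : IsFragment G T F) (hF' : IsFragment G T' F')
    (hmeet : (F ∩ F').Nonempty) :
    ((Set.univ \ (F' ∪ T')) ∩ T).ncard ≤ (F ∩ T').ncard := by
  have hFT : F ⊆ Tᶜ := frag_subset_aux hF
  have hFT' : F' ⊆ T'ᶜ := frag_subset_aux hF'
  set Y : Set V := (T ∩ (F' ∪ T')) ∪ (F ∩ T') with hY
  -- Y is a cut set
  have hYcut : IsCutSet G Y := by
    intro hpre
    obtain ⟨a, haF, haF'⟩ := hmeet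
    obtain ⟨b, hb⟩ := frag_compl_nonempty_aux hF
    have hbF : b ∉ F := fun h => hb (Or.inl h)
    have hbT : b ∉ T := fun h => hb (Or.inr h)
    have haY : a ∈ Yᶜ := by
      rintro (⟨haT, -⟩ | ⟨-, haT'⟩)
      · exact hFT haF haT
      · exact hFT' haF' haT'
    have hbY : b ∈ Yᶜ := by
      rintro (⟨h1, -⟩ | ⟨h1, -⟩)
      · exact hbT h1
      · exact hbF h1
    obtain ⟨w⟩ := hpre ⟨a, haY⟩ ⟨b, hbY⟩
    have hmem : (⟨b, hbY⟩ : (Yᶜ : Set V)) ∈ {z : (Yᶜ : Set V) | z.1 ∈ F ∩ F'} := by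
      refine walk_mem_aux ?_ w ⟨haF, haF'⟩
      rintro x ⟨hxF, hxF'⟩ y hadj
      have hyY : y.1 ∉ Y := y.2
      have hyT' : y.1 ∉ T' := by
        intro hyT'
        exact hyY (Or.inr ⟨frag_closed_aux hF hxF (fun h => hyY (Or.inl ⟨h, Or.inr hyT'⟩)) hadj, hyT'⟩)
      have hyF' : y.1 ∈ F' := frag_closed_aux hF' hxF' hyT' hadj
      have hyT : y.1 ∉ T := fun h => hyY (Or.inl ⟨h, Or.inl hyF'⟩)
      exact ⟨frag_closed_aux hF hxF hyT hadj, hyF'⟩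
    exact hbF hmem.1
  have hcard : T.ncard ≤ Y.ncard := hT.2 Y hYcut
  -- cardinality computations
  have h1 : (T ∩ (F' ∪ T')).ncard + (T \ (F' ∪ T')).ncard = T.ncard := by
    rw [← Set.ncard_union_eq (Set.disjoint_of_subset_left Set.inter_subset_right
      Set.disjoint_sdiff_right) (Set.toFinite _) (Set.toFinite _)]
    congr 1
    rw [Set.inter_union_diff]
  have h2 : Y.ncard = (T ∩ (F' ∪ T')).ncard + (F ∩ T').ncard := by
    rw [hY, Set.ncard_union_eq ?_ (Set.toFinite _) (Set.toFinite _)]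
    exact Set.disjoint_of_subset Set.inter_subset_left Set.inter_subset_left
      (Set.disjoint_left.mpr fun x hx hxF => hFT hxF hx)
  have h3 : (Set.univ \ (F' ∪ T')) ∩ T = T \ (F' ∪ T') := by
    ext x; simp [Set.mem_diff, and_comm]
  rw [h3]
  omega
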